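/- arXiv:1304.7394 — 4 statements merged into one kernel-verified Lean document; each statement's English description precedes it below -/
import Mathlib

section
/- The metric space (T↓, d_U) is complete: every Cauchy sequence in T↓ converges with respect to d_U. -/
open scoped Classical

namespace CSPLL

variable {E : Type*}

/-- Events: `none` is the termination signal ✓, `some a` is a visible event. -/
abbrev Ev (E : Type*) := Option E

/-- A member of `Σ^{*✓}`: the termination event ✓ may occur only as the last element. -/
def ValidTrace (s : List (Ev E)) : Prop := (none : Ev E) ∉ s.dropLast

/-- The semantic domain `T↓`: pairs `(T, D)` of (behavioural) traces and divergences
satisfying the axioms of the divergence-strict traces model. -/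
structure TD (E : Type*) where
  T : Set (List (Ev E))
  D : Set (List (Ev E))
  valid : ∀ s ∈ T, ValidTrace s
  d_sub : D ⊆ T
  nonempty : [] ∈ T
  prefix_closed : ∀ s t : List (Ev E), s ++ t ∈ T → s ∈ T
  tick_div : ∀ s : List (Ev E), s ++ [none] ∈ D → s ∈ D
  div_ext : ∀ s t : List (Ev E), s ∈ D → (none : Ev E) ∉ s → ValidTrace t → s ++ t ∈ D

/-- Raw trace/divergence pairs. -/
abbrev Pair (E : Type*) := Set (List (Ev E)) × Set (List (Ev E))

def TD.pair (P : TD E) : Pair E := (P.T, P.D)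

/-- `lengthU U s` counts the occurrences of events from `U` in the trace `s`. -/
noncomputable def lengthU (U : Set E) (s : List (Ev E)) : ℕ :=
  (s.filter fun x => decide (∃ a ∈ U, x = some a)).length

/-- Restriction `(T,D) ↾_U n` of a trace/divergence pair to `U`-length `n`. -/
noncomputable def restrict (U : Set E) (n : ℕ) (P : Pair E) : Pair E :=
  let D' := P.2 ∪ {u | ∃ s t, s ∈ P.1 ∧ (none : Ev E) ∉ s ∧ lengthU U s = n ∧
                       ValidTrace t ∧ u = s ++ t}
  (D' ∪ {s ∈ P.1 | lengthU U s ≤ n}, D')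

/-- The metric `d_U(P,Q) = inf {2^{-n} | P ↾_U n = Q ↾_U n}` (taken in `[0,1]`). -/
noncomputable def dU (U : Set E) (P Q : Pair E) : ℝ :=
  sInf {x : ℝ | ∃ n : ℕ, restrict U n P = restrict U n Q ∧ x = (1 / 2 : ℝ) ^ n}

noncomputable def dTD (U : Set E) (P Q : TD E) : ℝ := dU U P.pair Q.pair

lemma lengthU_append (U : Set E) (s t : List (Ev E)) :
    lengthU U (s ++ t) = lengthU U s + lengthU U t := by
  simp [lengthU, List.filter_append]

lemma validTrace_append {s t : List (Ev E)} (hs : (none : Ev E) ∉ s) (ht : ValidTrace t) :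
    ValidTrace (s ++ t) := by
  rcases eq_or_ne t [] with rfl | h
  · simpa [ValidTrace] using fun hmem => hs (List.dropLast_sublist s |>.mem hmem)
  · unfold ValidTrace
    rw [List.dropLast_append_of_ne_nil h]
    simp only [List.mem_append, not_or]
    exact ⟨hs, ht⟩

lemma suffix_facts {d u t : List (Ev E)} (hd : ValidTrace d) (hdut : d = u ++ t)
    (ht : t ≠ []) : (none : Ev E) ∉ u ∧ ValidTrace t := by
  have h : d.dropLast = u ++ t.dropLast := by
    rw [hdut, List.dropLast_append_of_ne_nil ht]
  exact ⟨fun hu => hd (h ▸ List.mem_append_left _ hu),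
         fun htt => hd (h ▸ List.mem_append_right _ htt)⟩

lemma exists_split (U : Set E) :
    ∀ (d : List (Ev E)) (k : ℕ), k < lengthU U d →
      ∃ u t, d = u ++ t ∧ lengthU U u = k ∧ t ≠ [] := by
  intro d
  induction d with
  | nil => intro k hk; simp [lengthU] at hk
  | cons x d ih =>
    intro k hk
    rcases Nat.eq_zero_or_pos k with rfl | hkpos
    · exact ⟨[], x :: d, rfl, rfl, by simp⟩
    obtain ⟨k, rfl⟩ := Nat.exists_eq_add_of_lt hkpos
    simp only [Nat.zero_add] at *
    by_cases hx : (decide (∃ a ∈ U, x = some a) : Bool) = true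
    · have hlen : lengthU U (x :: d) = lengthU U d + 1 := by
        simp [lengthU, List.filter_cons, hx]
      obtain ⟨u, t, h1, h2, h3⟩ := ih k (by omega)
      exact ⟨x :: u, t, by rw [h1]; rfl,
        by simp [lengthU, List.filter_cons, hx, lengthU] at h2 ⊢; omega, h3⟩
    · have hlen : lengthU U (x :: d) = lengthU U d := by
        simp only [lengthU, List.filter_cons]; rw [if_neg hx]
      obtain ⟨u, t, h1, h2, h3⟩ := ih (k+1) (by omega)
      refine ⟨x :: u, t, by rw [h1]; rfl, ?_, h3⟩
      simp only [lengthU, List.filter_cons] at h2 ⊢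
      rw [if_neg hx]; exact h2

lemma restrict_mem_D {U : Set E} {P : TD E} {j : ℕ} {s : List (Ev E)}
    (h : lengthU U s < j) : s ∈ (restrict U j P.pair).2 ↔ s ∈ P.D := by
  constructor
  · rintro (hs | ⟨u, t, _, _, hlen, _, rfl⟩)
    · exact hs
    · exfalso; rw [lengthU_append] at h; omega
  · intro hs; exact Or.inl hs

lemma restrict_mem_T {U : Set E} {P : TD E} {j : ℕ} {s : List (Ev E)}
    (h : lengthU U s < j) : s ∈ (restrict U j P.pair).1 ↔ s ∈ P.T := by
  constructor
  · rintro ((hs | ⟨u, t, _, _, hlen, _, rfl⟩) | ⟨hs, _⟩)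
    · exact P.d_sub hs
    · exfalso; rw [lengthU_append] at h; omega
    · exact hs
  · intro hs; exact Or.inr ⟨hs, le_of_lt h⟩

lemma restrict_zero (U : Set E) (P : TD E) :
    restrict U 0 P.pair = ({s | ValidTrace s}, {s | ValidTrace s}) := by
  have hD : (restrict U 0 P.pair).2 = {s | ValidTrace s} := by
    ext u
    constructor
    · rintro (hu | ⟨s, t, hs, hns, _, ht, rfl⟩)
      · exact P.valid u (P.d_sub hu)
      · exact validTrace_append hns ht
    · intro hu
      exact Or.inr ⟨[], u, P.nonempty, by simp, rfl, hu, rfl⟩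
  have : restrict U 0 P.pair =
    ((restrict U 0 P.pair).2 ∪ {s ∈ P.T | lengthU U s ≤ 0}, (restrict U 0 P.pair).2) := rfl
  rw [this, hD]
  refine Prod.ext ?_ rfl
  simp only
  apply Set.union_eq_self_of_subset_right
  intro s hs
  exact P.valid s hs.1

lemma Dprime_subset {U : Set E} {P Q : TD E} {k : ℕ}
    (hT : ∀ s, lengthU U s ≤ k → (s ∈ P.T → s ∈ Q.T))
    (hD : ∀ s, lengthU U s ≤ k → (s ∈ P.D → s ∈ Q.D)) :
    (restrict U k P.pair).2 ⊆ (restrict U k Q.pair).2 := by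
  rintro d (hd | ⟨u, t, hu, hnu, hlen, ht, rfl⟩)
  · -- d ∈ P.D
    by_cases hlen : lengthU U d ≤ k
    · exact Or.inl (hD d hlen hd)
    · push_neg at hlen
      obtain ⟨u, t, rfl, hulen, htne⟩ := exists_split U d k hlen
      have hvalid := P.valid _ (P.d_sub hd)
      obtain ⟨hnu, hvt⟩ := suffix_facts hvalid rfl htne
      have huT : u ∈ P.T := P.prefix_closed u t (P.d_sub hd)
      exact Or.inr ⟨u, t, hT u (le_of_eq hulen) huT, hnu, hulen, hvt, rfl⟩
  · exact Or.inr ⟨u, t, hT u (le_of_eq hlen) hu, hnu, hlen, ht, rfl⟩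

lemma restrict_eq_of_agree {U : Set E} {P Q : TD E} {k : ℕ}
    (hT : ∀ s, lengthU U s ≤ k → (s ∈ P.T ↔ s ∈ Q.T))
    (hD : ∀ s, lengthU U s ≤ k → (s ∈ P.D ↔ s ∈ Q.D)) :
    restrict U k P.pair = restrict U k Q.pair := by
  have h2 : (restrict U k P.pair).2 = (restrict U k Q.pair).2 :=
    Set.Subset.antisymm
      (Dprime_subset (fun s hs => (hT s hs).mp) (fun s hs => (hD s hs).mp))
      (Dprime_subset (fun s hs => (hT s hs).mpr) (fun s hs => (hD s hs).mpr))
  have h1 : {s ∈ P.pair.1 | lengthU U s ≤ k} = {s ∈ Q.pair.1 | lengthU U s ≤ k} := by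
    ext s; exact ⟨fun ⟨h, hl⟩ => ⟨(hT s hl).mp h, hl⟩, fun ⟨h, hl⟩ => ⟨(hT s hl).mpr h, hl⟩⟩
  show ((restrict U k P.pair).2 ∪ _, (restrict U k P.pair).2) = _
  rw [h2, h1]; rfl

/-- The metric space `(T↓, d_U)` is complete: every Cauchy sequence converges. -/
theorem dU_complete (U : Set E) (f : ℕ → TD E)
    (hCauchy : ∀ ε : ℝ, 0 < ε → ∃ N : ℕ, ∀ m ≥ N, ∀ n ≥ N, dTD U (f m) (f n) < ε) :
    ∃ P : TD E, ∀ ε : ℝ, 0 < ε → ∃ N : ℕ, ∀ n ≥ N, dTD U (f n) P < ε := by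
  have hSne : ∀ P Q : TD E,
      {x : ℝ | ∃ n : ℕ, restrict U n P.pair = restrict U n Q.pair ∧ x = (1/2:ℝ)^n}.Nonempty :=
    fun P Q => ⟨1, 0, by rw [restrict_zero, restrict_zero], by norm_num⟩
  have hSbdd : ∀ P Q : TD E,
      BddBelow {x : ℝ | ∃ n : ℕ, restrict U n P.pair = restrict U n Q.pair ∧ x = (1/2:ℝ)^n} :=
    fun P Q => ⟨0, by rintro x ⟨n, _, rfl⟩; positivity⟩
  have hM : ∀ k : ℕ, ∃ N, ∀ m ≥ N, ∀ n ≥ N, dTD U (f m) (f n) < (1/2:ℝ)^k :=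
    fun k => hCauchy _ (by positivity)
  choose M hMspec using hM
  have key : ∀ k : ℕ, ∀ m ≥ M k, ∀ n ≥ M k, ∀ s : List (Ev E), lengthU U s ≤ k →
      ((s ∈ (f m).T ↔ s ∈ (f n).T) ∧ (s ∈ (f m).D ↔ s ∈ (f n).D)) := by
    intro k m hm n hn s hs
    have h := hMspec k m hm n hn
    unfold dTD dU at h
    obtain ⟨x, ⟨j, hj, rfl⟩, hlt⟩ := exists_lt_of_csInf_lt (hSne _ _) h
    have hjk : k < j := by
      by_contra hle; push_neg at hle
      exact absurd hlt (not_lt.mpr (pow_le_pow_of_le_one (by norm_num) (by norm_num) hle))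
    have hsj : lengthU U s < j := lt_of_le_of_lt hs hjk
    constructor
    · rw [← restrict_mem_T (P := f m) hsj, ← restrict_mem_T (P := f n) hsj, hj]
    · rw [← restrict_mem_D (P := f m) hsj, ← restrict_mem_D (P := f n) hsj, hj]
  let P : TD E :=
  { T := {s | ∃ N, ∀ m ≥ N, s ∈ (f m).T}
    D := {s | ∃ N, ∀ m ≥ N, s ∈ (f m).D}
    valid := by rintro s ⟨N, hN⟩; exact (f N).valid s (hN N le_rfl)
    d_sub := by rintro s ⟨N, hN⟩; exact ⟨N, fun m hm => (f m).d_sub (hN m hm)⟩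
    nonempty := ⟨0, fun m _ => (f m).nonempty⟩
    prefix_closed := by
      rintro s t ⟨N, hN⟩; exact ⟨N, fun m hm => (f m).prefix_closed s t (hN m hm)⟩
    tick_div := by
      rintro s ⟨N, hN⟩; exact ⟨N, fun m hm => (f m).tick_div s (hN m hm)⟩
    div_ext := by
      rintro s t ⟨N, hN⟩ hns hvt
      exact ⟨N, fun m hm => (f m).div_ext s t (hN m hm) hns hvt⟩ }
  have charT : ∀ k : ℕ, ∀ m ≥ M k, ∀ s : List (Ev E), lengthU U s ≤ k →
      (s ∈ P.T ↔ s ∈ (f m).T) := by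
    intro k m hm s hs
    constructor
    · rintro ⟨N, hN⟩
      exact ((key k (max N (M k)) (le_max_right _ _) m hm s hs).1).mp
        (hN _ (le_max_left _ _))
    · intro h
      exact ⟨M k, fun m' hm' => ((key k m hm m' hm' s hs).1).mp h⟩
  have charD : ∀ k : ℕ, ∀ m ≥ M k, ∀ s : List (Ev E), lengthU U s ≤ k →
      (s ∈ P.D ↔ s ∈ (f m).D) := by
    intro k m hm s hs
    constructor
    · rintro ⟨N, hN⟩
      exact ((key k (max N (M k)) (le_max_right _ _) m hm s hs).2).mp
        (hN _ (le_max_left _ _))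
    · intro h
      exact ⟨M k, fun m' hm' => ((key k m hm m' hm' s hs).2).mp h⟩
  refine ⟨P, ?_⟩
  intro ε hε
  obtain ⟨k, hk⟩ := exists_pow_lt_of_lt_one hε (by norm_num : (1/2:ℝ) < 1)
  refine ⟨M k, fun n hn => ?_⟩
  have heq : restrict U k (f n).pair = restrict U k P.pair :=
    restrict_eq_of_agree
      (fun s hs => (charT k n hn s hs).symm)
      (fun s hs => (charD k n hn s hs).symm)
  calc dTD U (f n) P ≤ (1/2:ℝ)^k := csInf_le (hSbdd _ _) ⟨k, heq, rfl⟩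
    _ < ε := hk


end CSPLL
end

section
/- The set of livelock-free processes (those with empty divergence set) is a closed subset of the metric space (T↓, d_U): if a sequence of livelock-free elements of T↓ converges to Q with respect to d_U, then Q is livelock-free. -/
open scoped Classical

namespace CSPLL

variable {E : Type*}

lemma restrict_snd (U : Set E) (n : ℕ) (P : Pair E) :
    (restrict U n P).2 = P.2 ∪ {u | ∃ s t, s ∈ P.1 ∧ (none : Ev E) ∉ s ∧
      lengthU U s = n ∧ ValidTrace t ∧ u = s ++ t} := rfl

lemma restrict_fst (U : Set E) (n : ℕ) (P : Pair E) :
    (restrict U n P).1 = (restrict U n P).2 ∪ {s ∈ P.1 | lengthU U s ≤ n} := rfl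

/-- The set of livelock-free processes (empty divergence set) is closed in
`(T↓, d_U)`: a limit of livelock-free elements is livelock-free. -/
theorem livelockFree_closed (U : Set E) (f : ℕ → TD E) (Q : TD E)
    (hlf : ∀ n, (f n).D = ∅)
    (hconv : ∀ ε : ℝ, 0 < ε → ∃ N : ℕ, ∀ n ≥ N, dTD U (f n) Q < ε) :
    Q.D = ∅ := by
  by_contra hne
  obtain ⟨u, hu⟩ := Set.nonempty_iff_ne_empty.mpr hne
  set m := lengthU U u with hm
  obtain ⟨N, hN⟩ := hconv ((1 / 2 : ℝ) ^ (m + 1)) (by positivity)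
  have hd : dTD U (f N) Q < (1 / 2 : ℝ) ^ (m + 1) := hN N le_rfl
  set S : Set ℝ := {x : ℝ | ∃ n : ℕ, restrict U n (f N).pair = restrict U n Q.pair ∧
    x = (1 / 2 : ℝ) ^ n} with hS
  have hSne : S.Nonempty :=
    ⟨1, 0, by rw [restrict_zero, restrict_zero], by norm_num⟩
  have hd' : sInf S < (1 / 2 : ℝ) ^ (m + 1) := hd
  obtain ⟨x, ⟨k, hk, rfl⟩, hxlt⟩ := exists_lt_of_csInf_lt hSne hd'
  have hklt : m + 1 < k := by
    by_contra hkm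
    push_neg at hkm
    have : (1 / 2 : ℝ) ^ (m + 1) ≤ (1 / 2 : ℝ) ^ k :=
      pow_le_pow_of_le_one (by norm_num) (by norm_num) hkm
    linarith
  have huQ : u ∈ (restrict U k Q.pair).2 := by
    rw [restrict_snd]; exact Or.inl hu
  rw [← hk, restrict_snd] at huQ
  rcases huQ with h | ⟨s, t, hs, hns, hlen, ht, rfl⟩
  · have : (f N).pair.2 = ∅ := hlf N
    rw [this] at h
    exact h
  · have : lengthU U (s ++ t) = lengthU U s + lengthU U t := lengthU_append U s t
    omega

end CSPLL
end

section
/- Every infinite trace of a sequential composition P ; Q either is an infinite trace of P, or decomposes as t⌢u' where t⌢⟨✓⟩ is a terminating trace of P and u' is an infinite trace of Q. -/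
open scoped Classical

namespace CSPLL

variable {E : Type*}

/-- The length-`n` prefix of an infinite word. -/
def pref (u : ℕ → E) (n : ℕ) : List E := (List.range n).map u

/-- `u ∈ traces^ω(T)`: every finite prefix of `u` lies in `T`. -/
def InfTrace (T : Set (List E)) (u : ℕ → E) : Prop := ∀ n, pref u n ∈ T

def PrefixClosed (T : Set (List E)) : Prop := ∀ s t : List E, s ++ t ∈ T → s ∈ T

/-- The length-`n` prefix of an infinite (tick-free) word, as a trace in `Σ^{*✓}`. -/
def prefO (u : ℕ → E) (n : ℕ) : List (Option E) :=
  (List.range n).map fun i => (some (u i) : Option E)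

/-- Infinite traces of a trace set over `Σ^{*✓}`. -/
def InfTraceO (T : Set (List (Option E))) (u : ℕ → E) : Prop := ∀ n, prefO u n ∈ T

/-- `traces(P ; Q) = (traces(P) ∩ Σ*) ∪ {t⌢s | t⌢⟨✓⟩ ∈ traces(P), s ∈ traces(Q)}`,
where `none` plays the role of ✓. -/
def seqTraces (TP TQ : Set (List (Option E))) : Set (List (Option E)) :=
  {s ∈ TP | (none : Option E) ∉ s} ∪
    {x | ∃ t s, t ++ [(none : Option E)] ∈ TP ∧ s ∈ TQ ∧ x = t ++ s}

lemma prefO_length (u : ℕ → E) (n : ℕ) : (prefO u n).length = n := by simp [prefO]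

lemma prefO_take (u : ℕ → E) {k n : ℕ} (h : k ≤ n) :
    (prefO u n).take k = prefO u k := by
  apply List.ext_get
  · simp [prefO, h]
  · intro i h1 h2
    simp [prefO]

lemma prefO_append (u : ℕ → E) {k n : ℕ} (h : k ≤ n) :
    prefO u n = prefO u k ++ (prefO u n).drop k := by
  rw [← prefO_take u h, List.take_append_drop]

lemma prefO_drop_take (u : ℕ → E) {k m n : ℕ} (h : k + m ≤ n) :
    ((prefO u n).drop k).take m
      = (List.range m).map (fun i => (some (u (k + i)) : Option E)) := by
  apply List.ext_get
  · simp [prefO]; omega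
  · intro i h1 h2
    simp only [List.get_eq_getElem, List.getElem_take, List.getElem_drop,
      List.getElem_map, List.getElem_range, prefO]

/-- Every infinite trace of a sequential composition `P ; Q` either is an
infinite trace of `P`, or decomposes as `t⌢u'` where `t⌢⟨✓⟩` is a terminating
trace of `P` and `u'` is an infinite trace of `Q`. -/
theorem inft_seq [Fintype E] (TP TQ : Set (List (Option E)))
    (hP : ∀ s t : List (Option E), s ++ t ∈ TP → s ∈ TP)
    (hQ : ∀ s t : List (Option E), s ++ t ∈ TQ → s ∈ TQ)
    (u : ℕ → E) (hu : InfTraceO (seqTraces TP TQ) u) :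
    InfTraceO TP u ∨
      ∃ (t : List E) (u' : ℕ → E),
        t.map (fun a => (some a : Option E)) ++ [(none : Option E)] ∈ TP ∧
        InfTraceO TQ u' ∧ (∀ i : Fin t.length, u i = t.get i) ∧
        ∀ n, u (t.length + n) = u' n := by
  by_cases h1 : ∀ n, prefO u n ∈ TP
  · exact Or.inl h1
  right
  push_neg at h1
  obtain ⟨N, hN⟩ := h1
  have key : ∀ m, ∃ k, k < N ∧ prefO u k ++ [(none : Option E)] ∈ TP ∧
      (List.range m).map (fun i => (some (u (k + i)) : Option E)) ∈ TQ := by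
    intro m
    have h := hu (N + m)
    rcases h with ⟨hmem, -⟩ | ⟨t, s, ht, hs, heq⟩
    · exact absurd (hP _ _ ((prefO_append u (Nat.le_add_right N m)) ▸ hmem)) hN
    · have hlen : t.length ≤ N + m := by
        have := congrArg List.length heq
        simp [prefO_length] at this; omega
      have htpre : t = prefO u t.length := by
        have h0 : (prefO u (N + m)).take t.length = t := by
          rw [heq, List.take_left]
        rw [← prefO_take u hlen]; exact h0.symm
      have hkN : t.length < N := by
        by_contra hge
        push_neg at hge
        have htP : prefO u t.length ∈ TP := hP _ _ (htpre ▸ ht)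
        exact hN (hP _ _ ((prefO_append u hge) ▸ htP))
      refine ⟨t.length, hkN, htpre ▸ ht, ?_⟩
      have hsdrop : s = (prefO u (N + m)).drop t.length := by
        rw [heq, List.drop_left]
      have : ((prefO u (N + m)).drop t.length).take m ∈ TQ := by
        rw [← hsdrop]
        exact hQ _ _ ((List.take_append_drop m s) ▸ hs)
      rwa [prefO_drop_take u (by omega)] at this
  choose g hg1 hg2 hg3 using key
  have hNpos : 0 < N := lt_of_le_of_lt (Nat.zero_le _) (hg1 0)
  obtain ⟨k, hk⟩ := Finite.exists_infinite_fiber (fun m => (⟨g m, hg1 m⟩ : Fin N))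
  have hkinf : {m | g m = (k : ℕ)}.Infinite := by
    have := Set.infinite_coe_iff.mp hk
    apply this.mono ; intro m hm
    simp only [Set.mem_preimage, Set.mem_singleton_iff] at hm
    simpa using congrArg Fin.val hm
  have hgood : ∀ m, (List.range m).map (fun i => (some (u ((k : ℕ) + i)) : Option E)) ∈ TQ := by
    intro m
    obtain ⟨m', hm'mem, hm'⟩ := hkinf.exists_gt m
    have h2 := hg3 m'
    rw [hm'mem] at h2
    have h3 : ((List.range m').map (fun i => (some (u ((k : ℕ) + i)) : Option E))).take m ∈ TQ :=
      hQ _ _ (by rw [List.take_append_drop]; exact h2)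
    rwa [← List.map_take, List.take_range, min_eq_left hm'.le] at h3
  refine ⟨(List.range (k : ℕ)).map u, fun n => u ((k : ℕ) + n), ?_, hgood, ?_, ?_⟩
  · obtain ⟨m0, hm0⟩ := hkinf.nonempty
    have h4 := hg2 m0
    rw [hm0] at h4
    simpa [prefO, List.map_map, Function.comp_def] using h4
  · intro i; simp
  · intro n; simp

end CSPLL
end

section
/- Every infinite trace of a renamed process lifts along the renaming relation: if u ∈ traces^ω(P[R]) then there exists v ∈ traces^ω(P) with v R u (pointwise relatedness of equal-length words). -/
open scoped Classical

namespace CSPLL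

variable {E : Type*}

lemma pref_congr {u w : ℕ → E} {n : ℕ} (h : ∀ i < n, u i = w i) :
    pref u n = pref w n := by
  unfold pref
  exact List.map_congr_left (fun i hi => h i (List.mem_range.mp hi))

lemma pref_succ (u : ℕ → E) (n : ℕ) : pref u (n + 1) = pref u n ++ [u n] := by
  simp [pref, List.range_succ]

lemma length_pref (u : ℕ → E) (n : ℕ) : (pref u n).length = n := by
  simp [pref]

lemma get_pref (u : ℕ → E) (n i : ℕ) (h : i < n) :
    (pref u n).get ⟨i, by simpa [length_pref]⟩ = u i := by
  simp [pref]

/-- Every infinite trace of a renamed process `P[R]` lifts along the renaming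
relation to an infinite trace of `P`. -/
theorem inft_rename [Fintype E] (TP : Set (List E)) (hP : PrefixClosed TP)
    (R : E → E → Prop) (u : ℕ → E)
    (hu : InfTrace {t | ∃ s ∈ TP, List.Forall₂ R s t} u) :
    ∃ v : ℕ → E, InfTrace TP v ∧ ∀ i, R (v i) (u i) := by
  classical
  letI : TopologicalSpace E := ⊥
  haveI : DiscreteTopology E := ⟨rfl⟩
  set S : ℕ → Set (ℕ → E) :=
    fun n => {v | pref v n ∈ TP ∧ List.Forall₂ R (pref v n) (pref u n)} with hS
  have hdec : ∀ n, S (n + 1) ⊆ S n := by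
    intro n v hv
    obtain ⟨h1, h2⟩ := hv
    constructor
    · exact hP _ [v n] (by rw [← pref_succ]; exact h1)
    · have := List.forall₂_take n h2
      simpa [pref_succ, List.take_append, length_pref] using this
  have hne : ∀ n, (S n).Nonempty := by
    intro n
    obtain ⟨s, hs, hrel⟩ := hu n
    have hlen : s.length = n := by
      have := hrel.length_eq; simpa [length_pref] using this
    refine ⟨fun i => if h : i < n then s.get ⟨i, hlen ▸ h⟩ else u 0, ?_⟩
    have hps : pref (fun i => if h : i < n then s.get ⟨i, hlen ▸ h⟩ else u 0) n = s := by
      apply List.ext_get (by simp [length_pref, hlen])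
      intro i h1 h2
      have hi : i < n := by simpa [length_pref] using h1
      rw [get_pref _ n i hi]
      simp [hi]
    exact ⟨by rw [hps]; exact hs, by rw [hps]; exact hrel⟩
  have hcl : ∀ n, IsClosed (S n) := by
    intro n
    have : S n = (fun v : ℕ → E => fun i : Fin n => v i) ⁻¹'
        {f : Fin n → E | pref (fun i => if h : i < n then f ⟨i, h⟩ else u 0) n ∈ TP ∧
          List.Forall₂ R (pref (fun i => if h : i < n then f ⟨i, h⟩ else u 0) n) (pref u n)} := by
      ext v
      have hp : pref (fun i => if h : i < n then v i else u 0) n = pref v n :=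
        pref_congr (fun i hi => by simp [hi])
      simp only [hS, Set.mem_setOf_eq, Set.mem_preimage, hp]
    rw [this]
    exact (isClosed_discrete _).preimage (continuous_pi fun i => continuous_apply _)
  have hcomp : IsCompact (S 0) := (hcl 0).isCompact
  obtain ⟨v, hv⟩ :=
    IsCompact.nonempty_iInter_of_sequence_nonempty_isCompact_isClosed S hdec hne hcomp hcl
  simp only [Set.mem_iInter] at hv
  refine ⟨v, fun n => (hv n).1, fun i => ?_⟩
  have h2 := (hv (i + 1)).2
  have := List.forall₂_iff_get.mp h2
  have hR := this.2 i (by simp [length_pref]) (by simp [length_pref])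
  simpa [pref] using hR

end CSPLL
end
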